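/- Let α ≥ 0, d > 0, k > 0, γ > 0, h₀ > 0, T_∞ > 0, and let ν be the unique positive root of the equation h₀T_∞/(γ2^α d^{(α+1)/2}) = ν^{α+1}[M(α/2+1/2,1/2,ν²) + 2(√d h₀/k)ν M(α/2+1,3/2,ν²)]. Define c = h₀ T_∞ M(−α/2,1/2,−ν²) / [ M(−α/2,1/2,−ν²) + 2(√d h₀/k) ν M(−α/2+1/2,3/2,−ν²) ]. Then ν is the unique positive root of c/(γ2^α d^{(α+1)/2}) = λ^{α+1} M(α/2+1/2,1/2,λ²); i.e., the free-boundary coefficients of the convective problem (P1) and the flux problem (P3) coincide. -/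
import Mathlib


open Real Filter Topology

/-- The Kummer confluent hypergeometric function `M(a,b,z)`, defined by its power series. -/
noncomputable def kummerM (a b z : ℝ) : ℝ :=
  ∑' s : ℕ, ((ascPochhammer ℝ s).eval a / ((ascPochhammer ℝ s).eval b * (Nat.factorial s : ℝ)))
      * z ^ s

section KummerAux

open Finset Polynomial

/-- Abbreviation for the rising factorial (Pochhammer symbol) evaluated at a real. -/
noncomputable abbrev pch (n : ℕ) (x : ℝ) : ℝ := (ascPochhammer ℝ n).eval x

lemma pch_zero (x : ℝ) : pch 0 x = 1 := by simp [pch]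

lemma pch_succ (n : ℕ) (x : ℝ) : pch (n+1) x = pch n x * (x + n) :=
  ascPochhammer_succ_eval n x

lemma pch_succ_left (n : ℕ) (x : ℝ) : pch (n+1) x = x * pch n (x + 1) := by
  rw [pch, ascPochhammer_succ_left]
  simp [eval_comp]

lemma pch_pos {x : ℝ} (hx : 0 < x) (n : ℕ) : 0 < pch n x := by
  induction n with
  | zero => simp [pch_zero]
  | succ n ih => rw [pch_succ]; positivity

lemma pch_nonneg {x : ℝ} (hx : 0 ≤ x) (n : ℕ) : 0 ≤ pch n x := by
  induction n generalizing x with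
  | zero => simp [pch_zero]
  | succ n ih =>
    rw [pch_succ_left]
    exact mul_nonneg hx (ih (by linarith))

lemma abs_pch_le (a : ℝ) (n : ℕ) : |pch n a| ≤ pch n |a| := by
  induction n with
  | zero => simp [pch_zero]
  | succ n ih =>
    rw [pch_succ, pch_succ, abs_mul]
    have h1 : |a + (n:ℝ)| ≤ |a| + n := by
      calc |a + (n:ℝ)| ≤ |a| + |(n:ℝ)| := abs_add_le _ _
      _ = |a| + n := by rw [Nat.abs_cast]
    exact mul_le_mul ih h1 (abs_nonneg _) (pch_nonneg (abs_nonneg a) n)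

lemma pch_add_eval (n m : ℕ) (x : ℝ) : pch (n + m) x = pch n x * pch m (x + n) := by
  rw [pch, ← ascPochhammer_mul]
  simp [eval_comp]

/-- The general term of the Kummer series. -/
noncomputable def kterm (a b z : ℝ) (s : ℕ) : ℝ :=
  pch s a / (pch s b * (Nat.factorial s : ℝ)) * z ^ s

lemma kummerM_eq (a b z : ℝ) : kummerM a b z = ∑' s, kterm a b z s := rfl

lemma kterm_succ (a : ℝ) {b : ℝ} (hb : 0 < b) (z : ℝ) (s : ℕ) :
    kterm a b z (s+1) = kterm a b z s * ((a + s) * z / ((b + s) * (s+1))) := by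
  have h1 : (0:ℝ) < pch s b := pch_pos hb s
  have h2 : (0:ℝ) < b + s := by positivity
  have h3 : (0:ℝ) < (Nat.factorial s : ℝ) := by positivity
  simp only [kterm, pch_succ, Nat.factorial_succ, Nat.cast_mul, Nat.cast_add, Nat.cast_one]
  field_simp
  ring

lemma kterm_abs_summable (a : ℝ) {b : ℝ} (hb : 0 < b) (z : ℝ) :
    Summable (fun s => |kterm a b z s|) := by
  obtain ⟨N, hN⟩ := exists_nat_gt (max (|a| + 1) (4 * |z| + 1))
  apply summable_of_ratio_norm_eventually_le (r := (1/2 : ℝ)) (by norm_num)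
  filter_upwards [eventually_ge_atTop N] with n hn
  have hNn : (N:ℝ) ≤ n := by exact_mod_cast hn
  have han : |a| + 1 ≤ (n:ℝ) := (le_max_left _ _).trans (hN.le.trans hNn)
  have hzn : 4 * |z| + 1 ≤ (n:ℝ) := (le_max_right _ _).trans (hN.le.trans hNn)
  have hn1 : (1:ℝ) ≤ n := by nlinarith [abs_nonneg a]
  rw [Real.norm_eq_abs, Real.norm_eq_abs, abs_abs, abs_abs, kterm_succ a hb z n, abs_mul]
  have key : |(a + n) * z / ((b + n) * (n+1))| ≤ 1/2 := by
    rw [abs_div, abs_mul]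
    have hden : |(b + (n:ℝ)) * (n+1)| = (b + n) * (n+1) := by
      rw [abs_of_pos]; positivity
    rw [hden]
    rw [div_le_iff₀ (by positivity)]
    have h1 : |a + (n:ℝ)| ≤ 2 * n := by
      have : |a + (n:ℝ)| ≤ |a| + n := by
        simpa [Nat.abs_cast] using abs_add_le a (n:ℝ)
      nlinarith
    have h2 : (n:ℝ) * n ≤ (b + n) * (n + 1) := by nlinarith
    have h3 : |a + (n:ℝ)| * |z| ≤ 2 * n * |z| :=
      mul_le_mul_of_nonneg_right h1 (abs_nonneg z)
    have h4 : 2 * (n:ℝ) * |z| ≤ 1/2 * (n * n) := by nlinarith [abs_nonneg z]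
    calc |a + (n:ℝ)| * |z| ≤ 1/2 * (n*n) := h3.trans h4
      _ ≤ 1/2 * ((b+n)*(n+1)) := by nlinarith
  calc |kterm a b z n| * |(a + ↑n) * z / ((b + ↑n) * (↑n + 1))|
      ≤ |kterm a b z n| * (1/2) := mul_le_mul_of_nonneg_left key (abs_nonneg _)
    _ = 1/2 * |kterm a b z n| := by ring

lemma kterm_summable (a : ℝ) {b : ℝ} (hb : 0 < b) (z : ℝ) :
    Summable (kterm a b z) := (kterm_abs_summable a hb z).of_abs

/-- A Vandermonde-type identity for rising factorials, the combinatorial heart of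
Kummer's transformation. -/
lemma poch_vandermonde (a : ℝ) : ∀ (s : ℕ) (b : ℝ),
    ∑ m ∈ range (s+1),
      (-1:ℝ)^m * (s.choose m : ℝ) * pch m (b-a) * pch (s-m) (b+m) = pch s a := by
  intro s
  induction s with
  | zero => intro b; simp [pch_zero]
  | succ s ih =>
    intro b
    rw [Finset.sum_range_succ']
    have step : ∀ j ∈ range (s+1),
        (-1:ℝ)^(j+1) * ((s+1).choose (j+1) : ℝ) * pch (j+1) (b-a) * pch (s+1-(j+1)) (b+(j+1:ℕ))
        = (-1:ℝ)^(j+1) * (s.choose (j+1) : ℝ) * pch (j+1) (b-a) * pch (s+1-(j+1)) (b+(j+1:ℕ))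
          + (-(b-a)) * ((-1:ℝ)^j * (s.choose j : ℝ) * pch j ((b+1)-a) * pch (s-j) ((b+1)+j)) := by
      intro j hj
      have hch : ((s+1).choose (j+1) : ℝ) = (s.choose j : ℝ) + (s.choose (j+1) : ℝ) := by
        rw [Nat.choose_succ_succ]; push_cast; ring
      have hpl : pch (j+1) (b-a) = (b-a) * pch j (b-a+1) := pch_succ_left j (b-a)
      have harg1 : b - a + 1 = (b+1) - a := by ring
      have harg2 : b + ((j:ℝ)+1) = (b+1) + j := by ring
      have hidx : s + 1 - (j+1) = s - j := by omega
      rw [hch, hidx]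
      push_cast
      rw [harg2, hpl, harg1]
      ring
    rw [Finset.sum_congr rfl step, Finset.sum_add_distrib]
    rw [← Finset.mul_sum, ih (b+1)]
    have recomb :
        (∑ j ∈ range (s+1),
          (-1:ℝ)^(j+1) * (s.choose (j+1) : ℝ) * pch (j+1) (b-a) * pch (s+1-(j+1)) (b+(j+1:ℕ)))
          + ((-1:ℝ))^0 * ((s+1).choose 0 : ℝ) * pch 0 (b-a) * pch (s+1-0) (b+(0:ℕ))
        = ∑ m ∈ range (s+2),
            (-1:ℝ)^m * (s.choose m : ℝ) * pch m (b-a) * pch (s+1-m) (b+(m:ℕ)) := by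
      rw [Finset.sum_range_succ'
        (fun m => (-1:ℝ)^m * (s.choose m : ℝ) * pch m (b-a) * pch (s+1-m) (b+(m:ℕ))) (s+1)]
      congr 1
      simp [pch_zero]
    have htotal : ∑ m ∈ range (s+2),
        (-1:ℝ)^m * (s.choose m : ℝ) * pch m (b-a) * pch (s+1-m) (b+(m:ℕ))
        = (b + s) * pch s a := by
      rw [Finset.sum_range_succ]
      have hlast : ((-1:ℝ))^(s+1) * (s.choose (s+1) : ℝ) * pch (s+1) (b-a)
          * pch (s+1-(s+1)) (b+((s+1:ℕ):ℝ)) = 0 := by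
        simp [Nat.choose_succ_self]
      rw [hlast, add_zero]
      have hterm : ∀ m ∈ range (s+1),
          (-1:ℝ)^m * (s.choose m : ℝ) * pch m (b-a) * pch (s+1-m) (b+(m:ℕ))
          = (b + s) * ((-1:ℝ)^m * (s.choose m : ℝ) * pch m (b-a) * pch (s-m) (b+(m:ℕ))) := by
        intro m hm
        have hms : m ≤ s := by simpa using Nat.lt_succ_iff.mp (Finset.mem_range.mp hm)
        have hidx : s + 1 - m = (s - m) + 1 := by omega
        have hcast : ((s - m : ℕ) : ℝ) = (s:ℝ) - m := by
          rw [Nat.cast_sub hms]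
        rw [hidx, pch_succ, hcast]
        ring
      rw [Finset.sum_congr rfl hterm, ← Finset.mul_sum, ih b]
    have hsf := recomb.trans htotal
    have hps : pch (s+1) a = (b + s) * pch s a + (-(b-a) * pch s a) := by
      rw [pch_succ]; ring
    linarith [hsf, hps]

lemma kummer_row (a : ℝ) {b : ℝ} (hb : 0 < b) (z : ℝ) (s : ℕ) :
    ∑ k ∈ range (s+1), (z^k / (k.factorial : ℝ)) * kterm (b-a) b (-z) (s-k)
      = kterm a b z s := by
  have hrefl := Finset.sum_range_reflect
    (fun k => (z^k / (k.factorial : ℝ)) * kterm (b-a) b (-z) (s-k)) (s+1)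
  simp only [Nat.add_sub_cancel] at hrefl
  rw [← hrefl]
  have hstep : ∀ m ∈ range (s+1),
      (z^(s-m) / ((s-m).factorial : ℝ)) * kterm (b-a) b (-z) (s-(s-m))
      = ((-1:ℝ)^m * (s.choose m : ℝ) * pch m (b-a) * pch (s-m) (b+m))
          / (pch s b * (s.factorial : ℝ)) * z^s := by
    intro m hm
    have hms : m ≤ s := Nat.lt_succ_iff.mp (Finset.mem_range.mp hm)
    rw [Nat.sub_sub_self hms]
    unfold kterm
    have hzb : pch s b = pch m b * pch (s-m) (b+m) := by
      rw [← pch_add_eval m (s-m) b, Nat.add_sub_cancel' hms]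
    have hfac : (s.factorial : ℝ)
        = (s.choose m : ℝ) * (m.factorial : ℝ) * ((s-m).factorial : ℝ) := by
      exact_mod_cast (Nat.choose_mul_factorial_mul_factorial hms).symm
    have hzz : z^(s-m) * z^m = z^s := by
      rw [← pow_add, Nat.sub_add_cancel hms]
    have hneg : (-z)^m = (-1:ℝ)^m * z^m := by
      rw [neg_pow]
    have h1 : (0:ℝ) < pch m b := pch_pos hb m
    have h2 : (0:ℝ) < pch (s-m) (b+m) := pch_pos (by positivity) (s-m)
    have h3 : (0:ℝ) < (m.factorial : ℝ) := by positivity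
    have h4 : (0:ℝ) < ((s-m).factorial : ℝ) := by positivity
    have h5 : (0:ℝ) < (s.choose m : ℝ) := by
      exact_mod_cast Nat.choose_pos hms
    rw [hzb, hfac, hneg]
    field_simp
    ring_nf
    rw [hzz]
  rw [Finset.sum_congr rfl hstep, ← Finset.sum_mul, ← Finset.sum_div,
    poch_vandermonde a s b]
  rfl

/-- Kummer's transformation `M(a,b,z) = e^z M(b-a,b,-z)`. -/
lemma kummer_transform (a : ℝ) {b : ℝ} (hb : 0 < b) (z : ℝ) :
    kummerM a b z = Real.exp z * kummerM (b-a) b (-z) := by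
  have hf : Summable (fun n => ‖z^n / (n.factorial : ℝ)‖) := by
    simpa [Real.norm_eq_abs, abs_div, abs_pow, Nat.abs_cast] using
      Real.summable_pow_div_factorial |z|
  have hg : Summable (fun s => ‖kterm (b-a) b (-z) s‖) := by
    simpa [Real.norm_eq_abs] using kterm_abs_summable (b-a) hb (-z)
  rw [kummerM_eq, kummerM_eq, Real.exp_eq_exp_ℝ, NormedSpace.exp_eq_tsum_div,
    tsum_mul_tsum_eq_tsum_sum_antidiagonal_of_summable_norm hf hg]
  apply tsum_congr
  intro s
  rw [Finset.Nat.sum_antidiagonal_eq_sum_range_succ_mk]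
  simpa using (kummer_row a hb z s).symm

lemma kterm_nonneg {a b z : ℝ} (ha : 0 ≤ a) (hb : 0 < b) (hz : 0 ≤ z) (s : ℕ) :
    0 ≤ kterm a b z s := by
  unfold kterm
  have := pch_nonneg ha s
  have := pch_pos hb s
  positivity

lemma kterm_zero (a b z : ℝ) : kterm a b z 0 = 1 := by
  simp [kterm, pch_zero]

lemma kummer_one_le {a b z : ℝ} (ha : 0 ≤ a) (hb : 0 < b) (hz : 0 ≤ z) :
    1 ≤ kummerM a b z := by
  rw [kummerM_eq]
  have := Summable.le_tsum (kterm_summable a hb z) 0 (fun i _ => kterm_nonneg ha hb hz i)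
  rwa [kterm_zero] at this

lemma kummer_pos {a b z : ℝ} (ha : 0 ≤ a) (hb : 0 < b) (hz : 0 ≤ z) :
    0 < kummerM a b z := lt_of_lt_of_le one_pos (kummer_one_le ha hb hz)

lemma kummer_mono {a b z w : ℝ} (ha : 0 ≤ a) (hb : 0 < b) (hz : 0 ≤ z) (hzw : z ≤ w) :
    kummerM a b z ≤ kummerM a b w := by
  rw [kummerM_eq, kummerM_eq]
  refine Summable.tsum_le_tsum (fun s => ?_) (kterm_summable a hb z) (kterm_summable a hb w)
  unfold kterm
  have h1 := pch_nonneg ha s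
  have h2 := pch_pos hb s
  have h3 : z ^ s ≤ w ^ s := pow_le_pow_left₀ hz hzw s
  have h4 : 0 ≤ pch s a / (pch s b * (Nat.factorial s : ℝ)) := by positivity
  exact mul_le_mul_of_nonneg_left h3 h4

end KummerAux

/-- the free-boundary coefficients of problems (P1) and (P3) coincide
when `c` is defined from the data of (P1). -/
theorem P1_equiv_P3 (α d k γ h₀ Tinf ν : ℝ)
    (hα : 0 ≤ α) (hd : 0 < d) (hk : 0 < k) (hγ : 0 < γ) (hh : 0 < h₀) (hT : 0 < Tinf)
    (hν : 0 < ν)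
    (hνeq : h₀ * Tinf / (γ * 2 ^ α * d ^ ((α + 1) / 2))
      = ν ^ (α + 1) * (kummerM (α / 2 + 1 / 2) (1 / 2) (ν ^ 2)
          + 2 * (Real.sqrt d * h₀ / k) * ν * kummerM (α / 2 + 1) (3 / 2) (ν ^ 2)))
    (c : ℝ)
    (hc : c = h₀ * Tinf * kummerM (-α / 2) (1 / 2) (-ν ^ 2)
      / (kummerM (-α / 2) (1 / 2) (-ν ^ 2)
          + 2 * (Real.sqrt d * h₀ / k) * ν * kummerM (-α / 2 + 1 / 2) (3 / 2) (-ν ^ 2))) :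
    (c / (γ * 2 ^ α * d ^ ((α + 1) / 2))
        = ν ^ (α + 1) * kummerM (α / 2 + 1 / 2) (1 / 2) (ν ^ 2))
      ∧ ∀ l : ℝ, 0 < l →
          c / (γ * 2 ^ α * d ^ ((α + 1) / 2))
            = l ^ (α + 1) * kummerM (α / 2 + 1 / 2) (1 / 2) (l ^ 2) → l = ν := by
  have hb1 : (0:ℝ) < 1/2 := by norm_num
  have hb2 : (0:ℝ) < 3/2 := by norm_num
  have ha1 : (0:ℝ) ≤ α / 2 + 1 / 2 := by linarith
  have hβ : 0 < Real.sqrt d * h₀ / k := by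
    have := Real.sqrt_pos.mpr hd; positivity
  set β := Real.sqrt d * h₀ / k with hβdef
  set M1 := kummerM (α / 2 + 1 / 2) (1 / 2) (ν ^ 2) with hM1def
  set M2 := kummerM (α / 2 + 1) (3 / 2) (ν ^ 2) with hM2def
  have hM1 : 1 ≤ M1 := kummer_one_le ha1 hb1 (by positivity)
  have hM2 : 1 ≤ M2 := kummer_one_le (by linarith) hb2 (by positivity)
  set E := Real.exp (-ν ^ 2) with hEdef
  have hE : 0 < E := Real.exp_pos _
  have t1 : kummerM (-α / 2) (1 / 2) (-ν ^ 2) = E * M1 := by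
    have h := kummer_transform (-α / 2) hb1 (-ν ^ 2)
    rw [show (1:ℝ)/2 - -α/2 = α/2 + 1/2 from by ring, neg_neg] at h
    exact h
  have t2 : kummerM (-α / 2 + 1 / 2) (3 / 2) (-ν ^ 2) = E * M2 := by
    have h := kummer_transform (-α / 2 + 1 / 2) hb2 (-ν ^ 2)
    rw [show (3:ℝ)/2 - (-α/2 + 1/2) = α/2 + 1 from by ring, neg_neg] at h
    exact h
  set D := M1 + 2 * β * ν * M2 with hDdef
  have hD : 0 < D := by
    have : 0 < 2 * β * ν * M2 := by positivity
    rw [hDdef]; linarith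
  have hc' : c = h₀ * Tinf * M1 / D := by
    rw [hc, t1, t2,
      show h₀ * Tinf * (E * M1) = E * (h₀ * Tinf * M1) from by ring,
      show E * M1 + 2 * β * ν * (E * M2) = E * D from by rw [hDdef]; ring,
      mul_div_mul_left _ _ (ne_of_gt hE)]
  set G := γ * 2 ^ α * d ^ ((α + 1) / 2) with hGdef
  have hG : 0 < G := by
    have h2 : (0:ℝ) < (2:ℝ) ^ α := Real.rpow_pos_of_pos two_pos α
    have h3 : (0:ℝ) < d ^ ((α + 1) / 2) := Real.rpow_pos_of_pos hd _
    positivity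
  have h2 : h₀ * Tinf = ν ^ (α + 1) * D * G := by
    rw [div_eq_iff (ne_of_gt hG)] at hνeq
    rw [hνeq, hDdef]
  have key : c / G = ν ^ (α + 1) * M1 := by
    rw [hc', div_div, h2, div_eq_iff (by positivity : D * G ≠ 0)]
    ring
  refine ⟨key, fun l hl hleq => ?_⟩
  have heq : l ^ (α + 1) * kummerM (α / 2 + 1 / 2) (1 / 2) (l ^ 2)
      = ν ^ (α + 1) * M1 := by rw [← hleq, key]
  have mono : ∀ x y : ℝ, 0 < x → x < y →
      x ^ (α + 1) * kummerM (α / 2 + 1 / 2) (1 / 2) (x ^ 2)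
        < y ^ (α + 1) * kummerM (α / 2 + 1 / 2) (1 / 2) (y ^ 2) := by
    intro x y hx hxy
    have h1 : x ^ (α + 1) < y ^ (α + 1) :=
      Real.rpow_lt_rpow hx.le hxy (by linarith)
    have h2 : kummerM (α / 2 + 1 / 2) (1 / 2) (x ^ 2)
        ≤ kummerM (α / 2 + 1 / 2) (1 / 2) (y ^ 2) :=
      kummer_mono ha1 hb1 (by positivity) (by nlinarith)
    have h3 : 0 < kummerM (α / 2 + 1 / 2) (1 / 2) (x ^ 2) := kummer_pos ha1 hb1 (by positivity)
    have h4 : 0 ≤ y ^ (α + 1) := by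
      have : 0 < y ^ (α + 1) := Real.rpow_pos_of_pos (hx.trans hxy) _
      linarith
    exact mul_lt_mul h1 h2 h3 h4
  rcases lt_trichotomy l ν with h | h | h
  · exact absurd heq (ne_of_lt (by simpa [hM1def] using mono l ν hl h))
  · exact h
  · exact absurd heq (ne_of_gt (by simpa [hM1def] using mono ν l hν h))
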